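/- Let Ω_j ⊆ Ω be open, let δ > 0 and C_dPU > 0, and let χ : ℝ^d → ℝ be a differentiable function with |χ(x)| ≤ 1 and |∇χ(x)| ≤ C_dPU / δ for all x ∈ Ω_j. Then for all differentiable functions v, w : ℝ^d → ℝ whose values and gradients are square-integrable on Ω_j and square-integrable with respect to σ_j (with all relevant products integrable, and with χ v, χ w having square-integrable values and gradients on Ω_j), the commutator bound | a_j(v, χ w) − a_j(χ v, w) | ≤ C_dPU · ( ν₊ / √(c̃₋ ν₋) + A_∞ / c̃₋ ) · (1/δ) · ‖v‖_{1,c,Ω_j} ‖w‖_{1,c,Ω_j} holds (the boundary terms ∫ α v (χ w) dσ_j and ∫ α (χ v) w dσ_j cancel exactly). -/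

import Mathlib

open MeasureTheory
open scoped RealInnerProductSpace

section Helpers

variable {F : Type*} [NormedAddCommGroup F] [InnerProductSpace ℝ F] [CompleteSpace F]

theorem my_gradient_mul {f g : F → ℝ} {x : F} (hf : DifferentiableAt ℝ f x)
    (hg : DifferentiableAt ℝ g x) :
    gradient (fun y => f y * g y) x = f x • gradient g x + g x • gradient f x := by
  unfold gradient
  rw [fderiv_fun_mul hf hg, map_add]
  simp

theorem my_int_mul {α : Type*} [MeasurableSpace α] {μ : Measure α} {f g : α → ℝ}
    (hf : MemLp f 2 μ) (hg : MemLp g 2 μ) : Integrable (fun x => f x * g x) μ := by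
  have h := hg.smul (p := 2) (q := 2) (r := 1) hf
  rw [memLp_one_iff_integrable] at h
  exact h

theorem my_CS2 {α : Type*} [MeasurableSpace α] {μ : Measure α} {f g : α → ℝ}
    (hf : MemLp f 2 μ) (hg : MemLp g 2 μ) :
    ∫ a, ‖f a‖ * ‖g a‖ ∂μ ≤
      Real.sqrt (∫ a, f a ^ 2 ∂μ) * Real.sqrt (∫ a, g a ^ 2 ∂μ) := by
  have hpq : Real.HolderConjugate 2 2 := ⟨by norm_num, by norm_num, by norm_num⟩
  have h2 : ENNReal.ofReal (2 : ℝ) = 2 := by norm_num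
  have h := integral_mul_norm_le_Lp_mul_Lq hpq (h2 ▸ hf) (h2 ▸ hg)
  have e : ∀ (h : α → ℝ), (∫ a, ‖h a‖ ^ (2:ℝ) ∂μ) ^ (1/(2:ℝ))
      = Real.sqrt (∫ a, h a ^ 2 ∂μ) := by
    intro h
    rw [Real.sqrt_eq_rpow]
    congr 1
    refine integral_congr_ae (Filter.Eventually.of_forall fun a => ?_)
    norm_cast
    simp [sq_abs]
  rwa [e f, e g] at h

theorem my_sqrt_cs {a b c d : ℝ} (ha : 0 ≤ a) (hb : 0 ≤ b) (hc : 0 ≤ c) (hd : 0 ≤ d) :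
    Real.sqrt c * Real.sqrt b + Real.sqrt d * Real.sqrt a
      ≤ Real.sqrt (a + c) * Real.sqrt (b + d) := by
  rw [show Real.sqrt (a+c) * Real.sqrt (b+d) = Real.sqrt ((a+c)*(b+d)) from (Real.sqrt_mul (by positivity) _).symm]
  apply Real.le_sqrt_of_sq_le
  have h1 := Real.sq_sqrt ha
  have h2 := Real.sq_sqrt hb
  have h3 := Real.sq_sqrt hc
  have h4 := Real.sq_sqrt hd
  nlinarith [sq_nonneg (Real.sqrt a * Real.sqrt b - Real.sqrt c * Real.sqrt d),
    Real.sqrt_nonneg a, Real.sqrt_nonneg b, Real.sqrt_nonneg c, Real.sqrt_nonneg d]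

end Helpers

set_option maxHeartbeats 1000000 in

/-- commutator bound for the local reaction-convection-diffusion bilinear
form, `|a_j(v, χw) − a_j(χv, w)| ≤ C_dPU (ν₊/√(c̃₋ν₋) + A_∞/c̃₋)(1/δ) ‖v‖‖w‖`. -/
theorem stmt13 (d : ℕ) (hd : 1 ≤ d)
    (Ω : Set (EuclideanSpace ℝ (Fin d))) (hΩo : IsOpen Ω) (hΩb : Bornology.IsBounded Ω)
    (ct ν : EuclideanSpace ℝ (Fin d) → ℝ) (hctm : Measurable ct) (hνm : Measurable ν)
    (ctlo cthi νlo νhi : ℝ)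
    (hctlo : 0 < ctlo) (hct : ctlo ≤ cthi) (hνlo : 0 < νlo) (hν : νlo ≤ νhi)
    (hctbd : ∀ᵐ x ∂(volume.restrict Ω), ctlo ≤ ct x ∧ ct x ≤ cthi)
    (hνbd : ∀ᵐ x ∂(volume.restrict Ω), νlo ≤ ν x ∧ ν x ≤ νhi)
    -- the subdomain
    (Ωj : Set (EuclideanSpace ℝ (Fin d))) (hΩj : IsOpen Ωj) (hΩjsub : Ωj ⊆ Ω)
    -- the convection field, bounded a.e. on Ω_j by A∞
    (a : EuclideanSpace ℝ (Fin d) → EuclideanSpace ℝ (Fin d)) (ham : Measurable a)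
    (Ainf : ℝ) (hAinf : ∀ᵐ x ∂(volume.restrict Ωj), ‖a x‖ ≤ Ainf)
    -- the boundary (surface) measure on ∂Ω_j \ Γ_D and the Robin coefficient
    (σj : Measure (EuclideanSpace ℝ (Fin d)))
    (α : EuclideanSpace ℝ (Fin d) → ℝ) (hαm : Measurable α)
    -- the partition of unity function
    (δ CdPU : ℝ) (hδ : 0 < δ) (hCdPU : 0 < CdPU)
    (χ : EuclideanSpace ℝ (Fin d) → ℝ) (hχ : Differentiable ℝ χ)
    (hχbd : ∀ x ∈ Ωj, |χ x| ≤ 1)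
    (hχgrad : ∀ x ∈ Ωj, ‖gradient χ x‖ ≤ CdPU / δ)
    -- the functions
    (v w : EuclideanSpace ℝ (Fin d) → ℝ)
    (hv : Differentiable ℝ v) (hw : Differentiable ℝ w)
    (hvL2 : MemLp v 2 (volume.restrict Ωj)) (hwL2 : MemLp w 2 (volume.restrict Ωj))
    (hgvL2 : MemLp (gradient v) 2 (volume.restrict Ωj))
    (hgwL2 : MemLp (gradient w) 2 (volume.restrict Ωj))
    (hvσ : MemLp v 2 σj) (hwσ : MemLp w 2 σj)
    (hχvL2 : MemLp (fun x => χ x * v x) 2 (volume.restrict Ωj))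
    (hgχvL2 : MemLp (gradient fun x => χ x * v x) 2 (volume.restrict Ωj))
    (hχwL2 : MemLp (fun x => χ x * w x) 2 (volume.restrict Ωj))
    (hgχwL2 : MemLp (gradient fun x => χ x * w x) 2 (volume.restrict Ωj))
    -- integrability of the relevant products
    (hint1 : IntegrableOn (fun x =>
      ct x * v x * (χ x * w x)
        + (1 / 2) * ⟪a x, gradient v x⟫ * (χ x * w x)
        - (1 / 2) * v x * ⟪a x, gradient (fun y => χ y * w y) x⟫
        + ν x * ⟪gradient v x, gradient (fun y => χ y * w y) x⟫) Ωj)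
    (hint2 : IntegrableOn (fun x =>
      ct x * (χ x * v x) * w x
        + (1 / 2) * ⟪a x, gradient (fun y => χ y * v y) x⟫ * w x
        - (1 / 2) * (χ x * v x) * ⟪a x, gradient w x⟫
        + ν x * ⟪gradient (fun y => χ y * v y) x, gradient w x⟫) Ωj)
    (hint3 : Integrable (fun x => α x * v x * (χ x * w x)) σj)
    (hint4 : Integrable (fun x => α x * (χ x * v x) * w x) σj) :
    |((∫ x in Ωj,
        (ct x * v x * (χ x * w x)
          + (1 / 2) * ⟪a x, gradient v x⟫ * (χ x * w x)
          - (1 / 2) * v x * ⟪a x, gradient (fun y => χ y * w y) x⟫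
          + ν x * ⟪gradient v x, gradient (fun y => χ y * w y) x⟫))
        + ∫ x, α x * v x * (χ x * w x) ∂σj)
      - ((∫ x in Ωj,
        (ct x * (χ x * v x) * w x
          + (1 / 2) * ⟪a x, gradient (fun y => χ y * v y) x⟫ * w x
          - (1 / 2) * (χ x * v x) * ⟪a x, gradient w x⟫
          + ν x * ⟪gradient (fun y => χ y * v y) x, gradient w x⟫))
        + ∫ x, α x * (χ x * v x) * w x ∂σj)|
      ≤ CdPU * (νhi / Real.sqrt (ctlo * νlo) + Ainf / ctlo) * (1 / δ)
          * Real.sqrt (∫ x in Ωj, (ct x * v x ^ 2 + ν x * ‖gradient v x‖ ^ 2))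
          * Real.sqrt (∫ x in Ωj, (ct x * w x ^ 2 + ν x * ‖gradient w x‖ ^ 2)) := by
  have hB : (∫ x, α x * v x * (χ x * w x) ∂σj) = ∫ x, α x * (χ x * v x) * w x ∂σj :=
    integral_congr_ae (Filter.Eventually.of_forall fun x => by ring)
  -- pointwise commutator identity
  have key : ∀ x : EuclideanSpace ℝ (Fin d),
      (ct x * v x * (χ x * w x)
          + (1 / 2) * ⟪a x, gradient v x⟫ * (χ x * w x)
          - (1 / 2) * v x * ⟪a x, gradient (fun y => χ y * w y) x⟫
          + ν x * ⟪gradient v x, gradient (fun y => χ y * w y) x⟫)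
        - (ct x * (χ x * v x) * w x
          + (1 / 2) * ⟪a x, gradient (fun y => χ y * v y) x⟫ * w x
          - (1 / 2) * (χ x * v x) * ⟪a x, gradient w x⟫
          + ν x * ⟪gradient (fun y => χ y * v y) x, gradient w x⟫)
      = ν x * (w x * ⟪gradient v x, gradient χ x⟫ - v x * ⟪gradient w x, gradient χ x⟫)
          - v x * w x * ⟪a x, gradient χ x⟫ := by
    intro x
    rw [my_gradient_mul (hχ x) (hw x), my_gradient_mul (hχ x) (hv x)]
    simp only [inner_add_right, inner_add_left, real_inner_smul_right, real_inner_smul_left,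
      real_inner_comm (gradient χ x) (gradient w x)]
    ring
  set g : EuclideanSpace ℝ (Fin d) → ℝ := fun x =>
    ν x * (w x * ⟪gradient v x, gradient χ x⟫ - v x * ⟪gradient w x, gradient χ x⟫)
      - v x * w x * ⟪a x, gradient χ x⟫ with hgdef
  have hgint : Integrable g (volume.restrict Ωj) :=
    (hint1.sub hint2).congr (Filter.Eventually.of_forall key)
  have hEq : ((∫ x in Ωj,
        (ct x * v x * (χ x * w x)
          + (1 / 2) * ⟪a x, gradient v x⟫ * (χ x * w x)
          - (1 / 2) * v x * ⟪a x, gradient (fun y => χ y * w y) x⟫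
          + ν x * ⟪gradient v x, gradient (fun y => χ y * w y) x⟫))
        + ∫ x, α x * v x * (χ x * w x) ∂σj)
      - ((∫ x in Ωj,
        (ct x * (χ x * v x) * w x
          + (1 / 2) * ⟪a x, gradient (fun y => χ y * v y) x⟫ * w x
          - (1 / 2) * (χ x * v x) * ⟪a x, gradient w x⟫
          + ν x * ⟪gradient (fun y => χ y * v y) x, gradient w x⟫))
        + ∫ x, α x * (χ x * v x) * w x ∂σj) = ∫ x in Ωj, g x := by
    rw [hB]
    have h12 : (∫ x in Ωj,
        (ct x * v x * (χ x * w x)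
          + (1 / 2) * ⟪a x, gradient v x⟫ * (χ x * w x)
          - (1 / 2) * v x * ⟪a x, gradient (fun y => χ y * w y) x⟫
          + ν x * ⟪gradient v x, gradient (fun y => χ y * w y) x⟫))
      - (∫ x in Ωj,
        (ct x * (χ x * v x) * w x
          + (1 / 2) * ⟪a x, gradient (fun y => χ y * v y) x⟫ * w x
          - (1 / 2) * (χ x * v x) * ⟪a x, gradient w x⟫
          + ν x * ⟪gradient (fun y => χ y * v y) x, gradient w x⟫))
        = ∫ x in Ωj, g x := by
      rw [← integral_sub hint1 hint2]
      exact integral_congr_ae (Filter.Eventually.of_forall key)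
    linarith [h12]
  rw [hEq]
  -- basic integrability
  have i_v2 : Integrable (fun x => v x ^ 2) (volume.restrict Ωj) := hvL2.integrable_sq
  have i_w2 : Integrable (fun x => w x ^ 2) (volume.restrict Ωj) := hwL2.integrable_sq
  have i_gv2 : Integrable (fun x => ‖gradient v x‖ ^ 2) (volume.restrict Ωj) := hgvL2.norm.integrable_sq
  have i_gw2 : Integrable (fun x => ‖gradient w x‖ ^ 2) (volume.restrict Ωj) := hgwL2.norm.integrable_sq
  have hctae : ∀ᵐ x ∂(volume.restrict Ωj), ctlo ≤ ct x ∧ ct x ≤ cthi :=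
    ae_restrict_of_ae_restrict_of_subset hΩjsub hctbd
  have hνae : ∀ᵐ x ∂(volume.restrict Ωj), νlo ≤ ν x ∧ ν x ≤ νhi :=
    ae_restrict_of_ae_restrict_of_subset hΩjsub hνbd
  have hmem : ∀ᵐ x ∂(volume.restrict Ωj), x ∈ Ωj := ae_restrict_mem hΩj.measurableSet
  have i_ctv2 : Integrable (fun x => ct x * v x ^ 2) (volume.restrict Ωj) := by
    refine (i_v2.const_mul cthi).mono'
      (hctm.aestronglyMeasurable.mul i_v2.aestronglyMeasurable) ?_
    filter_upwards [hctae] with x hx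
    rw [Real.norm_eq_abs, abs_mul, abs_of_nonneg (hctlo.le.trans hx.1),
      abs_of_nonneg (sq_nonneg _)]
    exact mul_le_mul_of_nonneg_right hx.2 (sq_nonneg _)
  have i_ctw2 : Integrable (fun x => ct x * w x ^ 2) (volume.restrict Ωj) := by
    refine (i_w2.const_mul cthi).mono'
      (hctm.aestronglyMeasurable.mul i_w2.aestronglyMeasurable) ?_
    filter_upwards [hctae] with x hx
    rw [Real.norm_eq_abs, abs_mul, abs_of_nonneg (hctlo.le.trans hx.1),
      abs_of_nonneg (sq_nonneg _)]
    exact mul_le_mul_of_nonneg_right hx.2 (sq_nonneg _)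
  have i_νgv2 : Integrable (fun x => ν x * ‖gradient v x‖ ^ 2) (volume.restrict Ωj) := by
    refine (i_gv2.const_mul νhi).mono'
      (hνm.aestronglyMeasurable.mul i_gv2.aestronglyMeasurable) ?_
    filter_upwards [hνae] with x hx
    rw [Real.norm_eq_abs, abs_mul, abs_of_nonneg (hνlo.le.trans hx.1),
      abs_of_nonneg (sq_nonneg _)]
    exact mul_le_mul_of_nonneg_right hx.2 (sq_nonneg _)
  have i_νgw2 : Integrable (fun x => ν x * ‖gradient w x‖ ^ 2) (volume.restrict Ωj) := by
    refine (i_gw2.const_mul νhi).mono'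
      (hνm.aestronglyMeasurable.mul i_gw2.aestronglyMeasurable) ?_
    filter_upwards [hνae] with x hx
    rw [Real.norm_eq_abs, abs_mul, abs_of_nonneg (hνlo.le.trans hx.1),
      abs_of_nonneg (sq_nonneg _)]
    exact mul_le_mul_of_nonneg_right hx.2 (sq_nonneg _)
  rw [integral_add i_ctv2 i_νgv2, integral_add i_ctw2 i_νgw2]
  set A := ∫ x, ct x * v x ^ 2 ∂(volume.restrict Ωj) with hAdef
  set B := ∫ x, ct x * w x ^ 2 ∂(volume.restrict Ωj) with hBdef
  set C := ∫ x, ν x * ‖gradient v x‖ ^ 2 ∂(volume.restrict Ωj) with hCdef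
  set D := ∫ x, ν x * ‖gradient w x‖ ^ 2 ∂(volume.restrict Ωj) with hDdef
  set P := ∫ x, v x ^ 2 ∂(volume.restrict Ωj) with hPdef
  set Q := ∫ x, w x ^ 2 ∂(volume.restrict Ωj) with hQdef
  set R := ∫ x, ‖gradient v x‖ ^ 2 ∂(volume.restrict Ωj) with hRdef
  set S := ∫ x, ‖gradient w x‖ ^ 2 ∂(volume.restrict Ωj) with hSdef
  have hA0 : 0 ≤ A := integral_nonneg_of_ae (by
    filter_upwards [hctae] with x hx
    have h0 : (0:ℝ) ≤ ct x := hctlo.le.trans hx.1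
    positivity)
  have hB0 : 0 ≤ B := integral_nonneg_of_ae (by
    filter_upwards [hctae] with x hx
    have h0 : (0:ℝ) ≤ ct x := hctlo.le.trans hx.1
    positivity)
  have hC0 : 0 ≤ C := integral_nonneg_of_ae (by
    filter_upwards [hνae] with x hx
    have : (0:ℝ) ≤ ν x := hνlo.le.trans hx.1
    positivity)
  have hD0 : 0 ≤ D := integral_nonneg_of_ae (by
    filter_upwards [hνae] with x hx
    have : (0:ℝ) ≤ ν x := hνlo.le.trans hx.1
    positivity)
  rcases le_or_gt 0 Ainf with hApos | hAneg
  · -- main case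
    have hPA : ctlo * P ≤ A := by
      have h := integral_mono_ae (i_v2.const_mul ctlo) i_ctv2 (by
        filter_upwards [hctae] with x hx
        exact mul_le_mul_of_nonneg_right hx.1 (sq_nonneg _))
      simpa [integral_const_mul] using h
    have hQB : ctlo * Q ≤ B := by
      have h := integral_mono_ae (i_w2.const_mul ctlo) i_ctw2 (by
        filter_upwards [hctae] with x hx
        exact mul_le_mul_of_nonneg_right hx.1 (sq_nonneg _))
      simpa [integral_const_mul] using h
    have hRC : νlo * R ≤ C := by
      have h := integral_mono_ae (i_gv2.const_mul νlo) i_νgv2 (by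
        filter_upwards [hνae] with x hx
        exact mul_le_mul_of_nonneg_right hx.1 (sq_nonneg _))
      simpa [integral_const_mul] using h
    have hSD : νlo * S ≤ D := by
      have h := integral_mono_ae (i_gw2.const_mul νlo) i_νgw2 (by
        filter_upwards [hνae] with x hx
        exact mul_le_mul_of_nonneg_right hx.1 (sq_nonneg _))
      simpa [integral_const_mul] using h
    have hsP : Real.sqrt P ≤ Real.sqrt A / Real.sqrt ctlo := by
      rw [← Real.sqrt_div hA0]
      exact Real.sqrt_le_sqrt ((le_div_iff₀ hctlo).mpr (by linarith))
    have hsQ : Real.sqrt Q ≤ Real.sqrt B / Real.sqrt ctlo := by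
      rw [← Real.sqrt_div hB0]
      exact Real.sqrt_le_sqrt ((le_div_iff₀ hctlo).mpr (by linarith))
    have hsR : Real.sqrt R ≤ Real.sqrt C / Real.sqrt νlo := by
      rw [← Real.sqrt_div hC0]
      exact Real.sqrt_le_sqrt ((le_div_iff₀ hνlo).mpr (by linarith))
    have hsS : Real.sqrt S ≤ Real.sqrt D / Real.sqrt νlo := by
      rw [← Real.sqrt_div hD0]
      exact Real.sqrt_le_sqrt ((le_div_iff₀ hνlo).mpr (by linarith))
    have hT1 : ∫ x, ‖v x‖ * ‖w x‖ ∂(volume.restrict Ωj) ≤ Real.sqrt P * Real.sqrt Q := my_CS2 hvL2 hwL2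
    have hT2 : ∫ x, ‖w x‖ * ‖gradient v x‖ ∂(volume.restrict Ωj) ≤ Real.sqrt Q * Real.sqrt R := by
      have h := my_CS2 hwL2 hgvL2.norm
      simp only [norm_norm] at h
      exact h
    have hT3 : ∫ x, ‖v x‖ * ‖gradient w x‖ ∂(volume.restrict Ωj) ≤ Real.sqrt P * Real.sqrt S := by
      have h := my_CS2 hvL2 hgwL2.norm
      simp only [norm_norm] at h
      exact h
    -- pointwise bound
    have hνhi0 : (0:ℝ) ≤ νhi := hνlo.le.trans hν
    have hk0 : (0:ℝ) ≤ CdPU / δ := by positivity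
    have hptbd : ∀ᵐ x ∂(volume.restrict Ωj), |g x| ≤ CdPU / δ *
        (Ainf * (‖v x‖ * ‖w x‖)
          + νhi * (‖w x‖ * ‖gradient v x‖ + ‖v x‖ * ‖gradient w x‖)) := by
      filter_upwards [hAinf, hνae, hmem] with x hax hνx hxm
      obtain ⟨hνx1, hνx2⟩ := hνx
      have hν0 : (0:ℝ) ≤ ν x := hνlo.le.trans hνx1
      have e1 : |⟪a x, gradient χ x⟫| ≤ Ainf * (CdPU / δ) :=
        (abs_real_inner_le_norm _ _).trans
          (mul_le_mul hax (hχgrad x hxm) (norm_nonneg _) ((norm_nonneg _).trans hax))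
      have e2 : |⟪gradient v x, gradient χ x⟫| ≤ ‖gradient v x‖ * (CdPU / δ) :=
        (abs_real_inner_le_norm _ _).trans
          (mul_le_mul_of_nonneg_left (hχgrad x hxm) (norm_nonneg _))
      have e3 : |⟪gradient w x, gradient χ x⟫| ≤ ‖gradient w x‖ * (CdPU / δ) :=
        (abs_real_inner_le_norm _ _).trans
          (mul_le_mul_of_nonneg_left (hχgrad x hxm) (norm_nonneg _))
      have step : |g x| ≤ ν x * (|w x| * |⟪gradient v x, gradient χ x⟫|
            + |v x| * |⟪gradient w x, gradient χ x⟫|)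
          + |v x| * |w x| * |⟪a x, gradient χ x⟫| := by
        have t1 : |g x| ≤ |ν x * (w x * ⟪gradient v x, gradient χ x⟫
              - v x * ⟪gradient w x, gradient χ x⟫)|
            + |v x * w x * ⟪a x, gradient χ x⟫| := abs_sub _ _
        have t2 : |w x * ⟪gradient v x, gradient χ x⟫
              - v x * ⟪gradient w x, gradient χ x⟫|
            ≤ |w x| * |⟪gradient v x, gradient χ x⟫|
              + |v x| * |⟪gradient w x, gradient χ x⟫| := by
          refine (abs_sub _ _).trans ?_
          rw [abs_mul, abs_mul]
        calc |g x| ≤ _ := t1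
          _ ≤ _ := by
            rw [abs_mul (ν x), abs_of_nonneg hν0, abs_mul, abs_mul]
            exact add_le_add_left (mul_le_mul_of_nonneg_left t2 hν0) _
      calc |g x| ≤ _ := step
        _ ≤ νhi * (|w x| * (‖gradient v x‖ * (CdPU / δ))
              + |v x| * (‖gradient w x‖ * (CdPU / δ)))
            + |v x| * |w x| * (Ainf * (CdPU / δ)) := by gcongr
        _ = CdPU / δ * (Ainf * (‖v x‖ * ‖w x‖)
              + νhi * (‖w x‖ * ‖gradient v x‖ + ‖v x‖ * ‖gradient w x‖)) := by
            simp only [Real.norm_eq_abs]; ring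
    -- integral bound
    have i1 : Integrable (fun x => ‖v x‖ * ‖w x‖) (volume.restrict Ωj) := my_int_mul hvL2.norm hwL2.norm
    have i2 : Integrable (fun x => ‖w x‖ * ‖gradient v x‖) (volume.restrict Ωj) :=
      my_int_mul hwL2.norm hgvL2.norm
    have i3 : Integrable (fun x => ‖v x‖ * ‖gradient w x‖) (volume.restrict Ωj) :=
      my_int_mul hvL2.norm hgwL2.norm
    have hboundint : Integrable (fun x => CdPU / δ *
        (Ainf * (‖v x‖ * ‖w x‖)
          + νhi * (‖w x‖ * ‖gradient v x‖ + ‖v x‖ * ‖gradient w x‖))) (volume.restrict Ωj) :=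
      (((i1.const_mul Ainf).add ((i2.add i3).const_mul νhi)).const_mul (CdPU / δ))
    have habs : |∫ x, g x ∂(volume.restrict Ωj)| ≤ ∫ x, |g x| ∂(volume.restrict Ωj) := by
      simpa [Real.norm_eq_abs] using norm_integral_le_integral_norm (μ := volume.restrict Ωj) g
    have hmono : ∫ x, |g x| ∂(volume.restrict Ωj) ≤ ∫ x, CdPU / δ *
        (Ainf * (‖v x‖ * ‖w x‖)
          + νhi * (‖w x‖ * ‖gradient v x‖ + ‖v x‖ * ‖gradient w x‖)) ∂(volume.restrict Ωj) :=
      integral_mono_ae hgint.abs hboundint hptbd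
    have hbval : ∫ x, CdPU / δ *
        (Ainf * (‖v x‖ * ‖w x‖)
          + νhi * (‖w x‖ * ‖gradient v x‖ + ‖v x‖ * ‖gradient w x‖)) ∂(volume.restrict Ωj)
        = CdPU / δ * (Ainf * (∫ x, ‖v x‖ * ‖w x‖ ∂(volume.restrict Ωj))
          + νhi * ((∫ x, ‖w x‖ * ‖gradient v x‖ ∂(volume.restrict Ωj))
            + ∫ x, ‖v x‖ * ‖gradient w x‖ ∂(volume.restrict Ωj))) := by
      have i23 : Integrable (fun x => ‖w x‖ * ‖gradient v x‖ + ‖v x‖ * ‖gradient w x‖)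
          (volume.restrict Ωj) := i2.add i3
      have i1' : Integrable (fun x => Ainf * (‖v x‖ * ‖w x‖)) (volume.restrict Ωj) :=
        i1.const_mul Ainf
      have i23' : Integrable (fun x => νhi * (‖w x‖ * ‖gradient v x‖ + ‖v x‖ * ‖gradient w x‖))
          (volume.restrict Ωj) := i23.const_mul νhi
      rw [integral_const_mul, integral_add i1' i23', integral_const_mul, integral_const_mul,
        integral_add i2 i3]
    have hsA : Real.sqrt A ≤ Real.sqrt (A + C) :=
      Real.sqrt_le_sqrt (le_add_of_nonneg_right hC0)
    have hsB : Real.sqrt B ≤ Real.sqrt (B + D) :=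
      Real.sqrt_le_sqrt (le_add_of_nonneg_right hD0)
    have hPQ : Real.sqrt P * Real.sqrt Q
        ≤ Real.sqrt (A + C) * Real.sqrt (B + D) / ctlo := by
      calc Real.sqrt P * Real.sqrt Q
          ≤ (Real.sqrt A / Real.sqrt ctlo) * (Real.sqrt B / Real.sqrt ctlo) :=
            mul_le_mul hsP hsQ (Real.sqrt_nonneg _) (by positivity)
        _ = (Real.sqrt A * Real.sqrt B) / ctlo := by
            rw [div_mul_div_comm, Real.mul_self_sqrt hctlo.le]
        _ ≤ Real.sqrt (A + C) * Real.sqrt (B + D) / ctlo := by gcongr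
    have hRS : Real.sqrt Q * Real.sqrt R + Real.sqrt P * Real.sqrt S
        ≤ Real.sqrt (A + C) * Real.sqrt (B + D) / Real.sqrt (ctlo * νlo) := by
      have hcs := my_sqrt_cs hA0 hB0 hC0 hD0
      calc Real.sqrt Q * Real.sqrt R + Real.sqrt P * Real.sqrt S
          ≤ (Real.sqrt B / Real.sqrt ctlo) * (Real.sqrt C / Real.sqrt νlo)
            + (Real.sqrt A / Real.sqrt ctlo) * (Real.sqrt D / Real.sqrt νlo) :=
            add_le_add
              (mul_le_mul hsQ hsR (Real.sqrt_nonneg _) (by positivity))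
              (mul_le_mul hsP hsS (Real.sqrt_nonneg _) (by positivity))
        _ = (Real.sqrt C * Real.sqrt B + Real.sqrt D * Real.sqrt A)
            / (Real.sqrt ctlo * Real.sqrt νlo) := by ring
        _ ≤ (Real.sqrt (A + C) * Real.sqrt (B + D))
            / (Real.sqrt ctlo * Real.sqrt νlo) := by
            have h1 : (0:ℝ) < Real.sqrt ctlo := Real.sqrt_pos.mpr hctlo
            have h2 : (0:ℝ) < Real.sqrt νlo := Real.sqrt_pos.mpr hνlo
            exact div_le_div_of_nonneg_right hcs (by positivity) |>.trans_eq rfl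
        _ = Real.sqrt (A + C) * Real.sqrt (B + D) / Real.sqrt (ctlo * νlo) := by
            rw [Real.sqrt_mul hctlo.le]
    calc |∫ x, g x ∂(volume.restrict Ωj)| ≤ _ := habs
      _ ≤ _ := hmono
      _ = CdPU / δ * (Ainf * (∫ x, ‖v x‖ * ‖w x‖ ∂(volume.restrict Ωj))
          + νhi * ((∫ x, ‖w x‖ * ‖gradient v x‖ ∂(volume.restrict Ωj))
            + ∫ x, ‖v x‖ * ‖gradient w x‖ ∂(volume.restrict Ωj))) := hbval
      _ ≤ CdPU / δ * (Ainf * (Real.sqrt (A + C) * Real.sqrt (B + D) / ctlo)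
          + νhi * (Real.sqrt (A + C) * Real.sqrt (B + D) / Real.sqrt (ctlo * νlo))) := by
          gcongr
          · exact hT1.trans hPQ
          · exact (add_le_add hT2 hT3).trans hRS
      _ = CdPU * (νhi / Real.sqrt (ctlo * νlo) + Ainf / ctlo) * (1 / δ)
          * Real.sqrt (A + C) * Real.sqrt (B + D) := by ring
  · -- degenerate case: μ = 0
    have hfalse : ∀ᵐ x ∂(volume.restrict Ωj), False := by
      filter_upwards [hAinf] with x hx
      exact absurd ((norm_nonneg (a x)).trans hx) (not_le.mpr hAneg)
    have hzero : volume.restrict (α := EuclideanSpace ℝ (Fin d)) Ωj = 0 := by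
      have h2 := ae_iff.mp hfalse
      simp only [not_false_eq_true, Set.setOf_true] at h2
      exact Measure.measure_univ_eq_zero.mp h2
    simp only [hAdef, hBdef, hCdef, hDdef, hzero, integral_zero_measure,
      abs_zero, Real.sqrt_zero, add_zero, mul_zero]
    exact le_refl 0
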